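/- A bilinear form Ω on the Lie superalgebra gl(1|1) is even, supersymmetric and ad-invariant if and only if there exist β, k ∈ ℝ such that Ω(T₁,T₁) = β, Ω(T₁,T₂) = Ω(T₂,T₁) = k, Ω(T₃,T₄) = k, Ω(T₄,T₃) = −k, and all other values of Ω on basis vectors are zero. Moreover, such a form is non-degenerate if and only if k ≠ 0; thus after the normalization k = 1 the most general non-degenerate ad-invariant supersymmetric metric on gl(1|1) is the one-parameter family Ω_β. -/

import Mathlib

noncomputable section

/-- The underlying supervector space `V = ℝ⁴`, with basis `T 0, T 1` even and `T 2, T 3` odd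
(corresponding to `T₁, T₂; T₃, T₄`). -/
abbrev V4 : Type := Fin 4 → ℝ

/-- The basis vectors `T₁, T₂, T₃, T₄` (zero-indexed). -/
def T (i : Fin 4) : V4 := Pi.single i 1

/-- The even subspace `span{T₁,T₂}`. -/
def spanEven : Submodule ℝ V4 := Submodule.span ℝ {T 0, T 1}

/-- The odd subspace `span{T₃,T₄}`. -/
def spanOdd : Submodule ℝ V4 := Submodule.span ℝ {T 2, T 3}

/-- The bracket of the Lie superalgebra `gl(1|1)`: `[T₁,T₃] = T₃`, `[T₃,T₁] = −T₃`, `[T₁,T₄] = −T₄`, `[T₄,T₁] = T₄`, `[T₃,T₄] = [T₄,T₃] = T₂`, all other brackets of basis vectors zero. -/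
def br (x y : V4) : V4 := ![0, x 2 * y 3 + x 3 * y 2, x 0 * y 2 - x 2 * y 0, -(x 0 * y 3) + x 3 * y 0]

/-- A bilinear form is even: it vanishes whenever exactly one argument lies in the even
subspace and the other in the odd subspace. -/
def IsEvenForm (Ω : V4 →ₗ[ℝ] V4 →ₗ[ℝ] ℝ) : Prop :=
  (∀ x ∈ spanEven, ∀ y ∈ spanOdd, Ω x y = 0) ∧
  (∀ x ∈ spanOdd, ∀ y ∈ spanEven, Ω x y = 0)

/-- A bilinear form is supersymmetric: symmetric on the even subspace and antisymmetric on
the odd subspace. -/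
def IsSuperSym (Ω : V4 →ₗ[ℝ] V4 →ₗ[ℝ] ℝ) : Prop :=
  (∀ x ∈ spanEven, ∀ y ∈ spanEven, Ω x y = Ω y x) ∧
  (∀ x ∈ spanOdd, ∀ y ∈ spanOdd, Ω x y = -Ω y x)

/-- Ad-invariance of a bilinear form with respect to the bracket of `gl(1|1)`:
`Ω([x,y],z) = Ω(x,[y,z])` for all `x, y, z`. -/
def IsAdInv (Ω : V4 →ₗ[ℝ] V4 →ₗ[ℝ] ℝ) : Prop :=
  ∀ x y z : V4, Ω (br x y) z = Ω x (br y z)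

/-- The matrix of values of the claimed general ad-invariant supersymmetric form:
`Ω(T₁,T₁) = β`, `Ω(T₁,T₂) = Ω(T₂,T₁) = k`, `Ω(T₃,T₄) = k`, `Ω(T₄,T₃) = −k`, all other
values on basis vectors zero. -/
def OmegaMat (β k : ℝ) : Matrix (Fin 4) (Fin 4) ℝ :=
  !![β, k, 0, 0; k, 0, 0, 0; 0, 0, 0, k; 0, 0, -k, 0]

lemma T_apply (i j : Fin 4) : T i j = if j = i then 1 else 0 := Pi.single_apply i 1 j

lemma decompV4 (x : V4) : x = x 0 • T 0 + x 1 • T 1 + x 2 • T 2 + x 3 • T 3 := by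
  funext j
  fin_cases j <;> simp [T_apply]

lemma mem_spanEven (x : V4) (hx : x ∈ spanEven) : x 2 = 0 ∧ x 3 = 0 := by
  induction hx using Submodule.span_induction with
  | mem y hy => rcases hy with h | h <;> subst h <;> constructor <;> simp [T_apply]
  | zero => simp
  | add a b _ _ ha hb => constructor <;> simp [ha.1, ha.2, hb.1, hb.2]
  | smul c a _ ha => constructor <;> simp [Pi.smul_apply, ha.1, ha.2]

lemma mem_spanOdd (x : V4) (hx : x ∈ spanOdd) : x 0 = 0 ∧ x 1 = 0 := by
  induction hx using Submodule.span_induction with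
  | mem y hy => rcases hy with h | h <;> subst h <;> constructor <;> simp [T_apply]
  | zero => simp
  | add a b _ _ ha hb => constructor <;> simp [ha.1, ha.2, hb.1, hb.2]
  | smul c a _ ha => constructor <;> simp [Pi.smul_apply, ha.1, ha.2]

lemma T0_mem : T 0 ∈ spanEven := Submodule.subset_span (Set.mem_insert _ _)
lemma T1_mem : T 1 ∈ spanEven := Submodule.subset_span (Set.mem_insert_of_mem _ rfl)
lemma T2_mem : T 2 ∈ spanOdd := Submodule.subset_span (Set.mem_insert _ _)
lemma T3_mem : T 3 ∈ spanOdd := Submodule.subset_span (Set.mem_insert_of_mem _ rfl)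

lemma br02 : br (T 0) (T 2) = T 2 := by funext j; fin_cases j <;> simp [br, T_apply]
lemma br03 : br (T 0) (T 3) = -(T 3) := by funext j; fin_cases j <;> simp [br, T_apply]
lemma br23 : br (T 2) (T 3) = T 1 := by funext j; fin_cases j <;> simp [br, T_apply]
lemma br31 : br (T 3) (T 1) = 0 := by funext j; fin_cases j <;> simp [br, T_apply]
lemma br32 : br (T 3) (T 2) = T 1 := by funext j; fin_cases j <;> simp [br, T_apply]

lemma omega_formula (Ω : V4 →ₗ[ℝ] V4 →ₗ[ℝ] ℝ) (β k : ℝ)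
    (h : ∀ a b : Fin 4, Ω (T a) (T b) = !![β, k, 0, 0; k, 0, 0, 0; 0, 0, 0, k; 0, 0, -k, 0] a b)
    (x y : V4) :
    Ω x y = x 0 * y 0 * β + x 0 * y 1 * k + x 1 * y 0 * k + x 2 * y 3 * k - x 3 * y 2 * k := by
  conv_lhs => rw [decompV4 x, decompV4 y]
  simp only [map_add, map_smul, LinearMap.add_apply, LinearMap.smul_apply, smul_eq_mul, h]
  norm_num [Matrix.cons_val_zero, Matrix.cons_val_one, Matrix.head_cons, Matrix.vecHead, Matrix.vecTail]
  simp only [Matrix.cons_val]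
  ring

lemma br_app0 (x y : V4) : br x y 0 = 0 := rfl
lemma br_app1 (x y : V4) : br x y 1 = x 2 * y 3 + x 3 * y 2 := rfl
lemma br_app2 (x y : V4) : br x y 2 = x 0 * y 2 - x 2 * y 0 := rfl
lemma br_app3 (x y : V4) : br x y 3 = -(x 0 * y 3) + x 3 * y 0 := rfl

/-- A bilinear form `Ω` on the Lie superalgebra `gl(1|1)` is even, supersymmetric and ad-invariant
if and only if there exist `β, k ∈ ℝ` with `Ω(T₁,T₁) = β`, `Ω(T₁,T₂) = Ω(T₂,T₁) = k`,
`Ω(T₃,T₄) = k`, `Ω(T₄,T₃) = −k`, and all other values on basis vectors zero. Moreover, such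
a form is non-degenerate if and only if `k ≠ 0`. -/
theorem adInvariant_metric_gl11 (Ω : V4 →ₗ[ℝ] V4 →ₗ[ℝ] ℝ) :
    ((IsEvenForm Ω ∧ IsSuperSym Ω ∧ IsAdInv Ω) ↔
      ∃ β k : ℝ, ∀ a b : Fin 4, Ω (T a) (T b) = OmegaMat β k a b) ∧
    (∀ β k : ℝ, (∀ a b : Fin 4, Ω (T a) (T b) = OmegaMat β k a b) →
      ((∀ x : V4, (∀ y : V4, Ω x y = 0) → x = 0) ↔ k ≠ 0)) := by
  constructor
  · constructor
    · rintro ⟨hE, hS, hA⟩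
      refine ⟨Ω (T 0) (T 0), Ω (T 0) (T 1), ?_⟩
      have h02 : Ω (T 0) (T 2) = 0 := hE.1 _ T0_mem _ T2_mem
      have h03 : Ω (T 0) (T 3) = 0 := hE.1 _ T0_mem _ T3_mem
      have h12 : Ω (T 1) (T 2) = 0 := hE.1 _ T1_mem _ T2_mem
      have h13 : Ω (T 1) (T 3) = 0 := hE.1 _ T1_mem _ T3_mem
      have h20 : Ω (T 2) (T 0) = 0 := hE.2 _ T2_mem _ T0_mem
      have h21 : Ω (T 2) (T 1) = 0 := hE.2 _ T2_mem _ T1_mem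
      have h30 : Ω (T 3) (T 0) = 0 := hE.2 _ T3_mem _ T0_mem
      have h31 : Ω (T 3) (T 1) = 0 := hE.2 _ T3_mem _ T1_mem
      have h10 : Ω (T 1) (T 0) = Ω (T 0) (T 1) := (hS.1 _ T0_mem _ T1_mem).symm
      have h22 : Ω (T 2) (T 2) = 0 := by
        have := hS.2 _ T2_mem _ T2_mem; linarith
      have h33 : Ω (T 3) (T 3) = 0 := by
        have := hS.2 _ T3_mem _ T3_mem; linarith
      have h11 : Ω (T 1) (T 1) = 0 := by
        have := hA (T 2) (T 3) (T 1)
        rw [br23, br31] at this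
        simpa using this
      have h23 : Ω (T 2) (T 3) = Ω (T 0) (T 1) := by
        have := hA (T 0) (T 2) (T 3)
        rw [br02, br23] at this
        exact this
      have h32 : Ω (T 3) (T 2) = -Ω (T 0) (T 1) := by
        have := hA (T 0) (T 3) (T 2)
        rw [br03, br32] at this
        simp only [map_neg, LinearMap.neg_apply] at this
        linarith
      intro a b
      fin_cases a <;> fin_cases b <;>
        simp only [OmegaMat, Matrix.cons_val', Matrix.cons_val_zero, Matrix.cons_val_one,
          Matrix.head_cons, Matrix.empty_val', Matrix.cons_val_fin_one, Matrix.head_fin_const,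
          Matrix.of_apply, Fin.isValue, Matrix.cons_val_two, Matrix.cons_val_three,
          Matrix.tail_cons] <;>
        first | rfl | assumption
    · rintro ⟨β, k, h⟩
      have key := omega_formula Ω β k (by simpa [OmegaMat] using h)
      refine ⟨⟨?_, ?_⟩, ⟨?_, ?_⟩, ?_⟩
      · intro x hx y hy
        obtain ⟨hx2, hx3⟩ := mem_spanEven x hx
        obtain ⟨hy0, hy1⟩ := mem_spanOdd y hy
        rw [key, hx2, hx3, hy0, hy1]; ring
      · intro x hx y hy
        obtain ⟨hx0, hx1⟩ := mem_spanOdd x hx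
        obtain ⟨hy2, hy3⟩ := mem_spanEven y hy
        rw [key, hx0, hx1, hy2, hy3]; ring
      · intro x hx y hy
        obtain ⟨hx2, hx3⟩ := mem_spanEven x hx
        obtain ⟨hy2, hy3⟩ := mem_spanEven y hy
        rw [key, key, hx2, hx3, hy2, hy3]; ring
      · intro x hx y hy
        obtain ⟨hx0, hx1⟩ := mem_spanOdd x hx
        obtain ⟨hy0, hy1⟩ := mem_spanOdd y hy
        rw [key, key, hx0, hx1, hy0, hy1]; ring
      · intro x y z
        rw [key, key, br_app0, br_app0, br_app1, br_app1, br_app2, br_app2, br_app3, br_app3]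
        ring
  · intro β k h
    have key := omega_formula Ω β k (by simpa [OmegaMat] using h)
    constructor
    · intro hnd hk0
      subst hk0
      have hz : T 1 = (0 : V4) := hnd (T 1) (fun y => by rw [key]; simp [T_apply])
      have h1 : T 1 1 = (0 : V4) 1 := by rw [hz]
      simp [T_apply] at h1
    · intro hk x hx
      have e0 : x 0 = 0 := by
        have := hx (T 1); rw [key] at this; simp [T_apply] at this
        rcases this with h' | h'
        · exact h'
        · exact absurd h' hk
      have e1 : x 1 = 0 := by
        have := hx (T 0); rw [key] at this; simp [T_apply, e0] at this
        rcases this with h' | h'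
        · exact h'
        · exact absurd h' hk
      have e2 : x 2 = 0 := by
        have := hx (T 3); rw [key] at this; simp [T_apply, e0, e1] at this
        rcases this with h' | h'
        · exact h'
        · exact absurd h' hk
      have e3 : x 3 = 0 := by
        have := hx (T 2); rw [key] at this; simp [T_apply, e0, e1] at this
        rcases this with h' | h'
        · exact h'
        · exact absurd h' hk
      funext j
      fin_cases j <;> simp [e0, e1, e2, e3]
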